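/- Asymptotic expansion of the truncated kernel integral: let n ≥ 2 and k ∈ ℕ with n + 2k ≥ 4. There is a constant C = C(n,k) such that for all ε > 0, all ξ₁ ≠ 0 and all β ≥ ε|ξ₁|, | ∫_{ξ′ ∈ ℝ^{n−1}, |ξ′| ≤ β} ξ₁² |ξ′|^{2k} / (ε²ξ₁² + |ξ′|²) dξ′ − (σ_{n−2}/(n−3+2k)) ξ₁² β^{n−3+2k} | ≤ C ε |ξ₁|³ β^{n−4+2k}. -/

import Mathlib

open MeasureTheory Real Filter Topology ENNReal

/-- Surface measure of the unit sphere S^{n-2} ⊂ ℝ^{n-1}: σ_{n-2} = 2π^{(n-1)/2}/Γ((n-1)/2). -/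
noncomputable def sphereArea (n : ℕ) : ℝ :=
  2 * π ^ (((n:ℝ) - 1)/2) / Real.Gamma (((n:ℝ) - 1)/2)

lemma key1d (m : ℕ) (a β : ℝ) (ha : 0 < a) (hβ : a ≤ β) :
    |∫ r in (0:ℝ)..β, (r^(m+2)/(a^2+r^2) - r^m)| ≤ π/2 * a * β^m := by
  have hβ0 : 0 < β := ha.trans_le hβ
  have hden : ∀ r : ℝ, 0 < a^2 + r^2 := fun r => by positivity
  have hrw : ∀ r : ℝ, r^(m+2)/(a^2+r^2) - r^m = -(r^m * (a^2/(a^2+r^2))) := by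
    intro r
    field_simp
    ring
  have hcont : Continuous fun r : ℝ => r^m * (a^2/(a^2+r^2)) := by
    apply Continuous.mul (by fun_prop)
    exact continuous_const.div (by fun_prop) fun r => (hden r).ne'
  have hcont2 : Continuous fun r : ℝ => β^m * (1/(1+(r/a)^2)) := by
    apply Continuous.mul continuous_const
    exact continuous_const.div (by fun_prop) fun r => by positivity
  rw [intervalIntegral.integral_congr (fun r _ => hrw r), intervalIntegral.integral_neg, abs_neg]
  have h1 : |∫ r in (0:ℝ)..β, r^m * (a^2/(a^2+r^2))|
      = ∫ r in (0:ℝ)..β, r^m * (a^2/(a^2+r^2)) := by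
    rw [abs_of_nonneg]
    apply intervalIntegral.integral_nonneg hβ0.le
    intro r hr
    have : 0 ≤ r := hr.1
    positivity
  rw [h1]
  have h2 : (∫ r in (0:ℝ)..β, r^m * (a^2/(a^2+r^2)))
      ≤ ∫ r in (0:ℝ)..β, β^m * (1/(1+(r/a)^2)) := by
    apply intervalIntegral.integral_mono_on hβ0.le
      (hcont.intervalIntegrable _ _) (hcont2.intervalIntegrable _ _)
    intro r hr
    have h1a : a^2/(a^2+r^2) = 1/(1+(r/a)^2) := by
      rw [div_pow]
      rw [div_eq_div_iff (hden r).ne' (by positivity)]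
      field_simp
    rw [h1a]
    apply mul_le_mul_of_nonneg_right (pow_le_pow_left₀ hr.1 hr.2 m) (by positivity)
  refine h2.trans ?_
  rw [intervalIntegral.integral_const_mul]
  have h3 : (∫ r in (0:ℝ)..β, 1/(1+(r/a)^2)) = a * arctan (β/a) := by
    rw [intervalIntegral.integral_comp_div (fun u : ℝ => 1/(1+u^2)) ha.ne']
    rw [integral_one_div_one_add_sq, zero_div, arctan_zero, sub_zero, smul_eq_mul]
  rw [h3]
  have h4 : arctan (β/a) ≤ π/2 := (arctan_lt_pi_div_two _).le
  calc β^m * (a * arctan (β/a)) ≤ β^m * (a * (π/2)) := by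
        apply mul_le_mul_of_nonneg_left (mul_le_mul_of_nonneg_left h4 ha.le) (by positivity)
    _ = π/2 * a * β^m := by ring

lemma constEq (n : ℕ) (hn : 2 ≤ n) :
    ((n - 1 : ℕ) : ℝ) * (volume (Metric.ball (0 : EuclideanSpace ℝ (Fin (n-1))) 1)).toReal
      = sphereArea n := by
  have hd : 1 ≤ n - 1 := by omega
  have : Nonempty (Fin (n-1)) := ⟨⟨0, hd⟩⟩
  rw [EuclideanSpace.volume_ball]
  have hx : (0:ℝ) < ((n:ℝ) - 1)/2 := by
    have : (2:ℝ) ≤ n := by exact_mod_cast hn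
    linarith
  have hΓ : 0 < Real.Gamma (((n:ℝ) - 1)/2) := Real.Gamma_pos_of_pos hx
  have hcast : ((n - 1 : ℕ) : ℝ) = (n:ℝ) - 1 := by
    have : (1:ℕ) ≤ n := by omega
    push_cast [Nat.cast_sub this]; ring
  have hcard : Fintype.card (Fin (n-1)) = n - 1 := Fintype.card_fin _
  rw [hcard]
  have hpos : (0:ℝ) ≤ √π ^ (n-1) / Real.Gamma ((n-1 : ℕ)/2 + 1) := by
    have : ((n-1 : ℕ) : ℝ)/2 + 1 > 0 := by positivity
    have := Real.Gamma_pos_of_pos this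
    positivity
  rw [ENNReal.toReal_mul, ENNReal.ofReal_one, one_pow, ENNReal.toReal_one, one_mul,
    ENNReal.toReal_ofReal hpos]
  have hΓ1 : Real.Gamma (((n-1:ℕ):ℝ)/2 + 1) = (((n:ℝ)-1)/2) * Real.Gamma (((n:ℝ)-1)/2) := by
    rw [hcast, Real.Gamma_add_one hx.ne']
  have hsq : (√π : ℝ) ^ (n-1) = π ^ (((n:ℝ)-1)/2) := by
    rw [Real.sqrt_eq_rpow, ← Real.rpow_natCast (π ^ ((1:ℝ)/2)) (n-1),
      ← Real.rpow_mul pi_pos.le, hcast]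
    ring_nf
  rw [hΓ1, hsq, sphereArea, hcast]
  have hne : ((n:ℝ) - 1) ≠ 0 := by
    have : (2:ℝ) ≤ n := by exact_mod_cast hn
    linarith
  have gen : ∀ c g p : ℝ, g ≠ 0 → c ≠ 0 → c * (p / (c/2*g)) = 2*p/g := by
    intro c g p hg hc; field_simp
  exact gen _ _ _ hΓ.ne' hne

lemma polarStep (n : ℕ) (hn : 2 ≤ n) (g : ℝ → ℝ) (β : ℝ) (hβ : 0 < β) :
    (∫ x in Metric.closedBall (0 : EuclideanSpace ℝ (Fin (n-1))) β, g ‖x‖)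
      = sphereArea n * ∫ r in (0:ℝ)..β, r^(n-2) * g r := by
  have hd : 1 ≤ n - 1 := by omega
  haveI : Nonempty (Fin (n-1)) := ⟨⟨0, hd⟩⟩
  haveI : Nontrivial (EuclideanSpace ℝ (Fin (n-1))) := inferInstance
  set E := EuclideanSpace ℝ (Fin (n-1))
  set F : ℝ → ℝ := (Set.Iic β).indicator g with hF
  have h1 : ∀ x : E, (Metric.closedBall (0:E) β).indicator (fun x : E => g ‖x‖) x = F ‖x‖ := by
    intro x
    by_cases h : ‖x‖ ≤ β <;>
      simp [hF, Set.indicator, mem_closedBall_zero_iff (E := E), h]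
  rw [← integral_indicator (measurableSet_closedBall)]
  rw [integral_congr_ae (Filter.Eventually.of_forall h1)]
  rw [integral_fun_norm_addHaar volume F]
  have hdim : Module.finrank ℝ E = n - 1 := finrank_euclideanSpace_fin
  simp only [hdim]
  have h2 : ∀ y : ℝ, y ^ (n-1-1) • F y = (Set.Iic β).indicator (fun y => y^(n-2) * g y) y := by
    intro y
    have hexp : n - 1 - 1 = n - 2 := by omega
    rw [hexp]
    by_cases h : y ∈ Set.Iic β <;> simp [hF, Set.indicator, h, smul_eq_mul]
  simp_rw [h2]
  rw [setIntegral_indicator measurableSet_Iic, Set.Ioi_inter_Iic,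
    ← intervalIntegral.integral_of_le hβ.le, nsmul_eq_mul, smul_eq_mul, ← mul_assoc,
    measureReal_def, constEq n hn]

/-- asymptotic expansion of the truncated kernel integral. For n ≥ 2, k ∈ ℕ
    with n + 2k ≥ 4 there is C = C(n,k) such that for all ε > 0, ξ₁ ≠ 0 and β ≥ ε|ξ₁|,
    | ∫_{|ξ′|≤β} ξ₁²|ξ′|^{2k}/(ε²ξ₁² + |ξ′|²) dξ′ − σ_{n-2}/(n-3+2k) · ξ₁² β^{n-3+2k} |
      ≤ C ε |ξ₁|³ β^{n-4+2k}. -/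
theorem statement13 (n k : ℕ) (hn : 2 ≤ n) (hnk : 4 ≤ n + 2 * k) :
    ∃ C : ℝ, ∀ (ε ξ₁ β : ℝ), 0 < ε → ξ₁ ≠ 0 → ε * |ξ₁| ≤ β →
      |(∫ ξ' in Metric.closedBall (0 : EuclideanSpace ℝ (Fin (n-1))) β,
          ξ₁^2 * ‖ξ'‖^(2*k) / (ε^2 * ξ₁^2 + ‖ξ'‖^2)) -
        sphereArea n / ((n:ℝ) - 3 + 2*(k:ℝ)) * ξ₁^2 * β ^ ((n:ℝ) - 3 + 2*(k:ℝ))|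
      ≤ C * ε * |ξ₁|^3 * β ^ ((n:ℝ) - 4 + 2*(k:ℝ)) := by
  refine ⟨sphereArea n * (π/2), ?_⟩
  intro ε ξ₁ β hε hξ hβ
  set a : ℝ := ε * |ξ₁| with ha_def
  have ha : 0 < a := mul_pos hε (abs_pos.mpr hξ)
  have hβ0 : 0 < β := ha.trans_le hβ
  set m : ℕ := n + 2*k - 4 with hm
  have hσ : 0 ≤ sphereArea n := by
    rw [← constEq n hn]; positivity
  -- rewrite real exponents as natural ones
  have hc1 : (n:ℝ) - 3 + 2*(k:ℝ) = ((m+1 : ℕ):ℝ) := by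
    have h1 : (m+1 : ℕ) = n + 2*k - 3 := by omega
    rw [h1, Nat.cast_sub (by omega)]
    push_cast; ring
  have hc2 : (n:ℝ) - 4 + 2*(k:ℝ) = ((m : ℕ):ℝ) := by
    rw [hm, Nat.cast_sub (by omega)]
    push_cast; ring
  rw [hc1, hc2, Real.rpow_natCast, Real.rpow_natCast]
  -- positivity of the denominator
  have hden : ∀ r : ℝ, 0 < a^2 + r^2 := fun r => by positivity
  -- polar coordinates
  set g : ℝ → ℝ := fun r => ξ₁^2 * r^(2*k) / (a^2 + r^2) with hg
  have heq : (∫ ξ' in Metric.closedBall (0 : EuclideanSpace ℝ (Fin (n-1))) β,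
      ξ₁^2 * ‖ξ'‖^(2*k) / (ε^2 * ξ₁^2 + ‖ξ'‖^2))
      = ∫ x in Metric.closedBall (0 : EuclideanSpace ℝ (Fin (n-1))) β, g ‖x‖ := by
    refine integral_congr_ae (Filter.Eventually.of_forall fun x => ?_)
    rw [hg]
    simp only
    rw [ha_def, mul_pow, sq_abs]
  rw [heq, polarStep n hn g β hβ0]
  -- identify the 1D integrands
  have hJ : (∫ r in (0:ℝ)..β, r^(n-2) * g r)
      = ∫ r in (0:ℝ)..β, ξ₁^2 * (r^(m+2)/(a^2+r^2)) := by
    refine intervalIntegral.integral_congr fun r _ => ?_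
    rw [hg]
    simp only
    have : r^(n-2) * r^(2*k) = r^(m+2) := by
      rw [← pow_add]; congr 1; omega
    field_simp
    rw [← this]
  -- main term as an integral
  have hint1 : IntervalIntegrable (fun r : ℝ => r^(m+2)/(a^2+r^2)) volume 0 β := by
    apply Continuous.intervalIntegrable
    exact (continuous_pow _).div (by fun_prop) fun r => (hden r).ne'
  have hint2 : IntervalIntegrable (fun r : ℝ => r^m) volume 0 β :=
    (continuous_pow m).intervalIntegrable _ _
  have hmain : sphereArea n / ((m+1 : ℕ):ℝ) * ξ₁^2 * β^(m+1)
      = sphereArea n * ∫ r in (0:ℝ)..β, ξ₁^2 * r^m := by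
    rw [intervalIntegral.integral_const_mul, integral_pow]
    have hm1 : ((m:ℝ)+1) ≠ 0 := by positivity
    push_cast
    field_simp
    ring
  rw [hmain, ← mul_sub, hJ, intervalIntegral.integral_const_mul,
    intervalIntegral.integral_const_mul, ← mul_sub,
    ← intervalIntegral.integral_sub hint1 hint2, abs_mul, abs_mul,
    abs_of_nonneg hσ, abs_of_nonneg (sq_nonneg ξ₁)]
  have hkey := key1d m a β ha hβ
  calc sphereArea n * (ξ₁^2 * |∫ r in (0:ℝ)..β, (r^(m+2)/(a^2+r^2) - r^m)|)
      ≤ sphereArea n * (ξ₁^2 * (π/2 * a * β^m)) := by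
        apply mul_le_mul_of_nonneg_left (mul_le_mul_of_nonneg_left hkey (sq_nonneg _)) hσ
    _ = sphereArea n * (π/2) * ε * |ξ₁|^3 * β^m := by
        rw [ha_def, ← sq_abs ξ₁]; ring
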